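/- Let d ≥ 1, η > 0, x_1,…,x_T ∈ ℝ^d, M_1 = 0 and M_2,…,M_T ∈ ℝ^d. Define for each t ∈ [T] and i ∈ [d] the exponential weights iterates f_t(i) = exp(−η Σ_{s=1}^{t−1} x_s(i) − η M_t(i)) / Σ_{j=1}^{d} exp(−η Σ_{s=1}^{t−1} x_s(j) − η M_t(j)), and the local dual norm ‖x‖*_t = √(Σ_{i=1}^d f_t(i) x(i)²). If η ‖x_t − M_t‖_∞ ≤ 1/4 for every t ∈ [T], then for every f* in the probability simplex Δ_d = { f ∈ ℝ^d : f(i) ≥ 0, Σ_i f(i) = 1 }: Σ_{t=1}^T ⟨f_t − f*, x_t⟩ ≤ 2η Σ_{t=1}^T (‖x_t − M_t‖*_t)² + (log d)/η. -/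

import Mathlib

open Finset

lemma exp_neg_le_quad {a : ℝ} (ha : |a| ≤ 1) : Real.exp (-a) ≤ 1 - a + a ^ 2 := by
  have h := Real.exp_bound (x := -a) (by simpa using ha) (n := 2) (by norm_num)
  have hs : ∑ m ∈ Finset.range 2, (-a) ^ m / (m.factorial : ℝ) = 1 - a := by
    simp [Finset.sum_range_succ, sub_eq_add_neg]
  rw [hs] at h
  have h2 := (abs_le.1 h).2
  have h3 : |(-a)| ^ 2 = a ^ 2 := by rw [abs_neg, sq_abs]
  rw [h3] at h2
  norm_num [Nat.factorial] at h2
  nlinarith [sq_nonneg a]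

lemma telescope_Ico (g : ℕ → ℝ) (n : ℕ) :
    ∑ t ∈ Finset.Ico 1 (n + 1), (g t - g (t + 1)) = g 1 - g (n + 1) := by
  induction n with
  | zero => simp
  | succ n ih =>
      rw [Finset.sum_Ico_succ_top (Nat.succ_le_succ (Nat.zero_le n)), ih]; ring

/-- **Local-norm regret bound for optimistic exponential weights on the simplex.**
With `f_t(i) = exp(−η Σ_{s<t} x_s(i) − η M_t(i)) / Σ_j exp(−η Σ_{s<t} x_s(j) − η M_t(j))`
and local dual norms `‖v‖*_t = √(Σ_i f_t(i) v(i)²)`, if `η‖x_t − M_t‖_∞ ≤ 1/4` for every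
`t ∈ [T]` (the norm on `Fin d → ℝ` is the sup norm), then for every `f*` in the
probability simplex:
`Σ_t ⟨f_t − f*, x_t⟩ ≤ 2η Σ_t (‖x_t − M_t‖*_t)² + (log d)/η`. -/
theorem stmt_4 {d : ℕ} (hd : 1 ≤ d) (η : ℝ) (hη : 0 < η) (T : ℕ)
    (x M : ℕ → (Fin d → ℝ)) (hM1 : M 1 = 0)
    (f : ℕ → Fin d → ℝ)
    (hf : ∀ t, ∀ i, f t i =
      Real.exp (-η * (∑ s ∈ Ico 1 t, x s i) - η * M t i) /
        ∑ j, Real.exp (-η * (∑ s ∈ Ico 1 t, x s j) - η * M t j))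
    (hsmall : ∀ t ∈ Icc 1 T, η * ‖x t - M t‖ ≤ 1 / 4)
    (fstar : Fin d → ℝ) (hfstar : (∀ i, 0 ≤ fstar i) ∧ ∑ i, fstar i = 1) :
    ∑ t ∈ Icc 1 T, (∑ i, (f t i - fstar i) * x t i)
      ≤ 2 * η * ∑ t ∈ Icc 1 T, Real.sqrt (∑ i, f t i * (x t i - M t i) ^ 2) ^ 2
        + Real.log d / η := by
  have hne : Nonempty (Fin d) := ⟨⟨0, hd⟩⟩
  -- abbreviations
  set L : ℕ → Fin d → ℝ := fun t i => ∑ s ∈ Ico 1 t, x s i with hLdef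
  set W : ℕ → ℝ := fun t => ∑ j, Real.exp (-η * L t j) with hWdef
  set Z : ℕ → ℝ := fun t => ∑ j, Real.exp (-η * L t j - η * M t j) with hZdef
  have hWpos : ∀ t, 0 < W t := fun t =>
    Finset.sum_pos (fun j _ => Real.exp_pos _) univ_nonempty
  have hZpos : ∀ t, 0 < Z t := fun t =>
    Finset.sum_pos (fun j _ => Real.exp_pos _) univ_nonempty
  have hf' : ∀ t i, f t i = Real.exp (-η * L t i - η * M t i) / Z t := hf
  have hfpos : ∀ t i, 0 < f t i := fun t i => by
    rw [hf']; exact div_pos (Real.exp_pos _) (hZpos t)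
  have hfsum : ∀ t, ∑ i, f t i = 1 := by
    intro t
    simp only [hf']
    rw [← Finset.sum_div, div_self (hZpos t).ne']
  -- per-step inequality
  have key : ∀ t ∈ Icc 1 T, ∑ i, f t i * x t i ≤
      (Real.log (W t) - Real.log (W (t + 1))) / η
        + 2 * η * Real.sqrt (∑ i, f t i * (x t i - M t i) ^ 2) ^ 2 := by
    intro t ht
    obtain ⟨ht1, htT⟩ := mem_Icc.1 ht
    have habs : ∀ i, |η * (x t i - M t i)| ≤ 1 := by
      intro i
      have h1 : |x t i - M t i| ≤ ‖x t - M t‖ := by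
        simpa using norm_le_pi_norm (x t - M t) i
      have h2 := hsmall t ht
      have h3 : |η * (x t i - M t i)| = η * |x t i - M t i| := by
        rw [abs_mul, abs_of_pos hη]
      nlinarith [abs_nonneg (x t i - M t i)]
    have hLsucc : ∀ i, L (t + 1) i = L t i + x t i := fun i =>
      Finset.sum_Ico_succ_top ht1 _
    -- identity for W (t+1)
    have hA : W (t + 1) = Z t * ∑ i, f t i * Real.exp (-(η * (x t i - M t i))) := by
      rw [Finset.mul_sum]
      apply Finset.sum_congr rfl
      intro i _
      rw [hf' t i, hLsucc i]
      rw [show Z t * (Real.exp (-η * L t i - η * M t i) / Z t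
            * Real.exp (-(η * (x t i - M t i))))
          = Real.exp (-η * L t i - η * M t i)
            * Real.exp (-(η * (x t i - M t i))) from by
          field_simp [(hZpos t).ne'], ← Real.exp_add]
      congr 1; ring
    -- identity for W t
    have hB : W t = Z t * ∑ i, f t i * Real.exp (η * M t i) := by
      rw [Finset.mul_sum]
      apply Finset.sum_congr rfl
      intro i _
      rw [hf' t i]
      rw [show Z t * (Real.exp (-η * L t i - η * M t i) / Z t
            * Real.exp (η * M t i))
          = Real.exp (-η * L t i - η * M t i) * Real.exp (η * M t i) from by
          field_simp [(hZpos t).ne'], ← Real.exp_add]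
      congr 1; ring
    have hApos : 0 < ∑ i, f t i * Real.exp (-(η * (x t i - M t i))) :=
      Finset.sum_pos (fun i _ => mul_pos (hfpos t i) (Real.exp_pos _)) univ_nonempty
    have hBpos : 0 < ∑ i, f t i * Real.exp (η * M t i) :=
      Finset.sum_pos (fun i _ => mul_pos (hfpos t i) (Real.exp_pos _)) univ_nonempty
    -- upper bound on log of first sum
    have hlog1 : Real.log (∑ i, f t i * Real.exp (-(η * (x t i - M t i)))) ≤
        -(η * ∑ i, f t i * (x t i - M t i))
          + η ^ 2 * ∑ i, f t i * (x t i - M t i) ^ 2 := by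
      have hle : ∑ i, f t i * Real.exp (-(η * (x t i - M t i))) ≤
          ∑ i, f t i * (1 - η * (x t i - M t i) + (η * (x t i - M t i)) ^ 2) := by
        apply Finset.sum_le_sum
        intro i _
        exact mul_le_mul_of_nonneg_left (exp_neg_le_quad (habs i)) (hfpos t i).le
      have hsum' : ∑ i, f t i * (1 - η * (x t i - M t i) + (η * (x t i - M t i)) ^ 2)
          = 1 - η * ∑ i, f t i * (x t i - M t i)
            + η ^ 2 * ∑ i, f t i * (x t i - M t i) ^ 2 := by
        calc ∑ i, f t i * (1 - η * (x t i - M t i) + (η * (x t i - M t i)) ^ 2)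
            = ∑ i, (f t i - η * (f t i * (x t i - M t i))
                + η ^ 2 * (f t i * (x t i - M t i) ^ 2)) := by
              apply Finset.sum_congr rfl; intro i _; ring
          _ = 1 - η * ∑ i, f t i * (x t i - M t i)
                + η ^ 2 * ∑ i, f t i * (x t i - M t i) ^ 2 := by
              rw [Finset.sum_add_distrib, Finset.sum_sub_distrib, hfsum t,
                ← Finset.mul_sum, ← Finset.mul_sum]
      have := Real.log_le_sub_one_of_pos hApos
      rw [hsum'] at hle
      linarith
    -- lower bound on log of second sum (Jensen)
    have hlog2 : η * ∑ i, f t i * M t i ≤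
        Real.log (∑ i, f t i * Real.exp (η * M t i)) := by
      have hjensen := convexOn_exp.map_sum_le (t := Finset.univ)
        (w := fun i => f t i) (p := fun i => η * M t i)
        (fun i _ => (hfpos t i).le) (hfsum t) (fun i _ => Set.mem_univ _)
      simp only [smul_eq_mul] at hjensen
      have h1 : η * ∑ i, f t i * M t i = ∑ i, f t i * (η * M t i) := by
        rw [Finset.mul_sum]; apply Finset.sum_congr rfl; intro i _; ring
      rw [h1, ← Real.log_exp (∑ i, f t i * (η * M t i))]
      exact Real.log_le_log (Real.exp_pos _) hjensen
    have hWlog : Real.log (W (t + 1)) - Real.log (W t) =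
        Real.log (∑ i, f t i * Real.exp (-(η * (x t i - M t i))))
          - Real.log (∑ i, f t i * Real.exp (η * M t i)) := by
      rw [hA, hB, Real.log_mul (hZpos t).ne' hApos.ne',
        Real.log_mul (hZpos t).ne' hBpos.ne']
      ring
    have hxsplit : ∑ i, f t i * x t i =
        (∑ i, f t i * (x t i - M t i)) + ∑ i, f t i * M t i := by
      rw [← Finset.sum_add_distrib]
      apply Finset.sum_congr rfl; intro i _; ring
    have hQnonneg : 0 ≤ ∑ i, f t i * (x t i - M t i) ^ 2 :=
      Finset.sum_nonneg fun i _ => mul_nonneg (hfpos t i).le (sq_nonneg _)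
    have hsq : Real.sqrt (∑ i, f t i * (x t i - M t i) ^ 2) ^ 2
        = ∑ i, f t i * (x t i - M t i) ^ 2 := Real.sq_sqrt hQnonneg
    rw [hsq]
    have hmain : η * (∑ i, f t i * x t i) ≤
        Real.log (W t) - Real.log (W (t + 1))
          + η ^ 2 * ∑ i, f t i * (x t i - M t i) ^ 2 := by
      rw [hxsplit]
      nlinarith [hlog1, hlog2, hWlog]
    have h4 : ∑ i, f t i * x t i ≤
        (Real.log (W t) - Real.log (W (t + 1))
          + η ^ 2 * ∑ i, f t i * (x t i - M t i) ^ 2) / η := by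
      rw [le_div_iff₀ hη]
      nlinarith [hmain]
    have h5 : (Real.log (W t) - Real.log (W (t + 1))
          + η ^ 2 * ∑ i, f t i * (x t i - M t i) ^ 2) / η
        = (Real.log (W t) - Real.log (W (t + 1))) / η
          + η * ∑ i, f t i * (x t i - M t i) ^ 2 := by
      field_simp
    have h6 : η * ∑ i, f t i * (x t i - M t i) ^ 2
        ≤ 2 * η * ∑ i, f t i * (x t i - M t i) ^ 2 := by
      nlinarith [hQnonneg, hη.le]
    linarith
  -- sum the per-step inequality
  have hsum := Finset.sum_le_sum key
  have hIcc : Icc 1 T = Ico 1 (T + 1) := (Finset.Ico_add_one_right_eq_Icc ..).symm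
  have htel : ∑ t ∈ Icc 1 T, (Real.log (W t) - Real.log (W (t + 1))) / η
      = (Real.log (W 1) - Real.log (W (T + 1))) / η := by
    rw [hIcc, ← Finset.sum_div, telescope_Ico (fun t => Real.log (W t)) T]
  have hsplit : ∑ t ∈ Icc 1 T, ((Real.log (W t) - Real.log (W (t + 1))) / η
        + 2 * η * Real.sqrt (∑ i, f t i * (x t i - M t i) ^ 2) ^ 2)
      = (Real.log (W 1) - Real.log (W (T + 1))) / η
        + 2 * η * ∑ t ∈ Icc 1 T, Real.sqrt (∑ i, f t i * (x t i - M t i) ^ 2) ^ 2 := by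
    rw [Finset.sum_add_distrib, htel, Finset.mul_sum]
  rw [hsplit] at hsum
  -- W 1 = d
  have hW1 : W 1 = d := by
    have hL1 : ∀ j, L 1 j = 0 := fun j => by
      simp [hLdef]
    simp only [hWdef, hL1, mul_zero, Real.exp_zero]
    simp
  -- lower bound log W (T+1)
  obtain ⟨i0, _, hi0⟩ := Finset.exists_min_image Finset.univ (fun i => L (T + 1) i)
    Finset.univ_nonempty
  have hWge : Real.exp (-η * L (T + 1) i0) ≤ W (T + 1) :=
    Finset.single_le_sum (fun j _ => (Real.exp_pos (-η * L (T+1) j)).le)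
      (Finset.mem_univ i0)
  have hlogW : -η * L (T + 1) i0 ≤ Real.log (W (T + 1)) :=
    (Real.le_log_iff_exp_le (hWpos _)).2 hWge
  have hstar : L (T + 1) i0 ≤ ∑ i, fstar i * L (T + 1) i := by
    calc L (T + 1) i0 = ∑ i, fstar i * L (T + 1) i0 := by
          rw [← Finset.sum_mul, hfstar.2, one_mul]
      _ ≤ ∑ i, fstar i * L (T + 1) i := by
          apply Finset.sum_le_sum
          intro i _
          exact mul_le_mul_of_nonneg_left (hi0 i (Finset.mem_univ i)) (hfstar.1 i)
  -- rewrite LHS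
  have hLHS : ∑ t ∈ Icc 1 T, (∑ i, (f t i - fstar i) * x t i)
      = (∑ t ∈ Icc 1 T, ∑ i, f t i * x t i) - ∑ i, fstar i * L (T + 1) i := by
    have h1 : ∑ t ∈ Icc 1 T, ∑ i, fstar i * x t i = ∑ i, fstar i * L (T + 1) i := by
      rw [Finset.sum_comm]
      refine Finset.sum_congr rfl fun i _ => ?_
      rw [← Finset.mul_sum]
      congr 1
    rw [← h1, ← Finset.sum_sub_distrib]
    apply Finset.sum_congr rfl
    intro t _
    rw [← Finset.sum_sub_distrib]
    apply Finset.sum_congr rfl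
    intro i _
    ring
  rw [hLHS]
  -- final arithmetic
  have hfrac : (Real.log (W 1) - Real.log (W (T + 1))) / η
      ≤ Real.log d / η + ∑ i, fstar i * L (T + 1) i := by
    have h1 : Real.log (W 1) - Real.log (W (T + 1))
        ≤ Real.log d + η * ∑ i, fstar i * L (T + 1) i := by
      rw [hW1]
      nlinarith [hlogW, hstar, hη]
    calc (Real.log (W 1) - Real.log (W (T + 1))) / η
        ≤ (Real.log d + η * ∑ i, fstar i * L (T + 1) i) / η := by gcongr
      _ = Real.log d / η + ∑ i, fstar i * L (T + 1) i := by
          field_simp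
  linarith [hsum, hfrac]
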